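/- Let H be a real inner product space with dim H ≥ 3 (i.e. the rank of H over ℝ is at least 3). Let ξ, η be unit vectors in H with ⟪ξ, η⟫ = c, and let r be a real number with 2c² − 1 ≤ r ≤ 1. Then there exists a unit vector η′ in H such that ⟪ξ, η′⟫ = c and ⟪η, η′⟫ = r. -/

import Mathlib

open RealInnerProductSpace

theorem exists_unit_vector_with_inner
    {H : Type*} [NormedAddCommGroup H] [InnerProductSpace ℝ H]
    (hdim : 3 ≤ Module.rank ℝ H)
    (ξ η : H) (hξ : ‖ξ‖ = 1) (hη : ‖η‖ = 1)
    (c : ℝ) (hc : ⟪ξ, η⟫ = c)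
    (r : ℝ) (hr1 : 2 * c ^ 2 - 1 ≤ r) (hr2 : r ≤ 1) :
    ∃ η' : H, ‖η'‖ = 1 ∧ ⟪ξ, η'⟫ = c ∧ ⟪η, η'⟫ = r := by
  -- First, find a unit vector `u` orthogonal to both `ξ` and `η`.
  obtain ⟨u, hu, huξ, huη⟩ : ∃ u : H, ‖u‖ = 1 ∧ ⟪ξ, u⟫ = 0 ∧ ⟪η, u⟫ = 0 := by
    set K := Submodule.span ℝ ({ξ, η} : Set H) with hK
    have hfd : FiniteDimensional ℝ K := by
      apply FiniteDimensional.span_of_finite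
      exact (Set.finite_singleton η).insert ξ
    have hne : Kᗮ ≠ ⊥ := by
      intro h
      have htop : K = ⊤ := by
        have h2 := Submodule.sup_orthogonal_of_hasOrthogonalProjection (K := K)
        rwa [h, sup_bot_eq] at h2
      have h1 : Module.rank ℝ H ≤ 2 := by
        calc Module.rank ℝ H = Module.rank ℝ (⊤ : Submodule ℝ H) := (rank_top ℝ H).symm
          _ = Module.rank ℝ K := by rw [htop]
          _ ≤ Cardinal.mk ({ξ, η} : Set H) := rank_span_le _
          _ ≤ 2 := by
              calc Cardinal.mk ({ξ, η} : Set H) ≤ Cardinal.mk ({η} : Set H) + 1 :=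
                    Cardinal.mk_insert_le
                _ = 2 := by rw [Cardinal.mk_singleton]; norm_num
      have := hdim.trans h1
      norm_num at this
    obtain ⟨v, hvK, hv0⟩ := (Submodule.ne_bot_iff _).1 hne
    refine ⟨‖v‖⁻¹ • v, ?_, ?_, ?_⟩
    · rw [norm_smul, norm_inv, norm_norm, inv_mul_cancel₀ (norm_ne_zero_iff.2 hv0)]
    · rw [real_inner_smul_right]
      have : ⟪ξ, v⟫ = 0 := (Submodule.mem_orthogonal K v).1 hvK ξ
        (Submodule.subset_span (Set.mem_insert _ _))
      rw [this, mul_zero]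
    · rw [real_inner_smul_right]
      have : ⟪η, v⟫ = 0 := (Submodule.mem_orthogonal K v).1 hvK η
        (Submodule.subset_span (Set.mem_insert_of_mem _ rfl))
      rw [this, mul_zero]
  have hξξ : ⟪ξ, ξ⟫ = 1 := by
    rw [real_inner_self_eq_norm_sq, hξ]; norm_num
  have hηη : ⟪η, η⟫ = 1 := by
    rw [real_inner_self_eq_norm_sq, hη]; norm_num
  have hηξ : ⟪η, ξ⟫ = c := by rw [real_inner_comm]; exact hc
  have huu : ⟪u, u⟫ = 1 := by
    rw [real_inner_self_eq_norm_sq, hu]; norm_num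
  have huξ' : ⟪u, ξ⟫ = 0 := by rw [real_inner_comm]; exact huξ
  have huη' : ⟪u, η⟫ = 0 := by rw [real_inner_comm]; exact huη
  have hc1 : c ^ 2 ≤ 1 := by
    have := abs_real_inner_le_norm ξ η
    rw [hc, hξ, hη] at this
    nlinarith [abs_nonneg c, le_abs_self c, neg_abs_le c]
  rcases eq_or_lt_of_le hc1 with hcsq | hcsq
  · -- degenerate case: c² = 1, so r = 1 and η itself works
    have hr : r = 1 := le_antisymm hr2 (by nlinarith)
    exact ⟨η, hη, hc, by rw [hηη, hr]⟩
  · -- main case: c² < 1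
    set t : ℝ := (r - c ^ 2) / (1 - c ^ 2) with ht
    have h1c : (0:ℝ) < 1 - c ^ 2 := by linarith
    have ht1 : t ^ 2 ≤ 1 := by
      rw [ht, div_pow, div_le_one (by positivity)]
      nlinarith
    set s : ℝ := Real.sqrt (1 - c ^ 2) with hs
    have hs2 : s ^ 2 = 1 - c ^ 2 := Real.sq_sqrt h1c.le
    set t' : ℝ := Real.sqrt (1 - t ^ 2) with ht'
    have ht'2 : t' ^ 2 = 1 - t ^ 2 := Real.sq_sqrt (by linarith)
    set w : H := c • ξ + t • (η - c • ξ) + (s * t') • u with hw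
    refine ⟨w, ?_, ?_, ?_⟩
    · have hnorm : ⟪w, w⟫ = 1 := by
        rw [hw]
        simp only [inner_add_left, inner_add_right, inner_sub_left, inner_sub_right,
          real_inner_smul_left, real_inner_smul_right, hξξ, hηη, hηξ, hc, huu, huξ, huη,
          huξ', huη']
        linear_combination t' ^ 2 * hs2 + (1 - c ^ 2) * ht'2
      have h2 : ‖w‖ ^ 2 = 1 := by
        rw [← real_inner_self_eq_norm_sq, hnorm]
      nlinarith [norm_nonneg w, h2]
    · rw [hw]
      simp only [inner_add_right, inner_sub_right, real_inner_smul_right, hξξ, hc, huξ]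
      ring
    · rw [hw]
      simp only [inner_add_right, inner_sub_right, real_inner_smul_right, hηη, hηξ, huη]
      rw [ht]
      field_simp
      ring
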